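/- Let r < b be real numbers, let g : [r,b] → ℝ be concave with g(r) = 0, and let ḡ : [r,b] → ℝ be affine with ḡ(r) = 0 and ∫_r^b ḡ(u) du = ∫_r^b g(u) du. Then there exists y₀ ∈ (r,b) such that g − ḡ ≥ 0 on [r, y₀] and g − ḡ ≤ 0 on [y₀, b]; consequently, ∫_r^y g(u) du ≥ ∫_r^y ḡ(u) du for every y ∈ [r,b]. -/

import Mathlib

open MeasureTheory Set

/-- Crossing-point argument: a concave function starting at `0` crosses an affine
comparison function with the same integral exactly once from above; consequently its
partial integrals dominate those of the affine function. -/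
theorem concave_crosses_affine_once
    (r b : ℝ) (hrb : r < b) (g gbar : ℝ → ℝ)
    (hg : ConcaveOn ℝ (Icc r b) g) (hgr : g r = 0)
    (hgbar : ∃ α β : ℝ, ∀ x, gbar x = α * x + β)
    (hgbarr : gbar r = 0)
    (hint : ∫ u in r..b, gbar u = ∫ u in r..b, g u) :
    ∃ y₀ ∈ Ioo r b,
      (∀ y ∈ Icc r y₀, gbar y ≤ g y) ∧
      (∀ y ∈ Icc y₀ b, g y ≤ gbar y) ∧
      (∀ y ∈ Icc r b, ∫ u in r..y, gbar u ≤ ∫ u in r..y, g u) := by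
  obtain ⟨α, β, hab⟩ := hgbar
  have hgbar_cont : Continuous gbar := by
    have : gbar = fun x => α * x + β := funext hab
    rw [this]; continuity
  -- gbar is convex (affine)
  have hgbar_cvx : ConvexOn ℝ (Icc r b) gbar := by
    refine ⟨convex_Icc _ _, ?_⟩
    intro x _ y _ a c ha hc hac
    simp only [smul_eq_mul, hab]
    have : α * (a * x + c * y) + β = a * (α * x + β) + c * (α * y + β) := by
      linear_combination -β * hac
    linarith [this.le]
  set h : ℝ → ℝ := fun x => g x - gbar x with hh_def
  have hh : ConcaveOn ℝ (Icc r b) h := hg.sub hgbar_cvx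
  have hhr : h r = 0 := by simp [hh_def, hgr, hgbarr]
  have hrmem : r ∈ Icc r b := ⟨le_refl r, hrb.le⟩
  have hbmem : b ∈ Icc r b := ⟨hrb.le, le_refl b⟩
  -- key concavity inequality
  have key : ∀ y z : ℝ, r ≤ y → y ≤ z → z ≤ b → r < z →
      (y - r) / (z - r) * h z ≤ h y := by
    intro y z hry hyz hzb hrz
    have hzr : (0:ℝ) < z - r := by linarith
    set a := (z - y) / (z - r) with ha_def
    set t := (y - r) / (z - r) with ht_def
    have ha : 0 ≤ a := div_nonneg (by linarith) (by linarith)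
    have ht : 0 ≤ t := div_nonneg (by linarith) (by linarith)
    have hne : z - r ≠ 0 := ne_of_gt hzr
    have hat : a + t = 1 := by rw [ha_def, ht_def]; field_simp; ring
    have hcomb : a * r + t * z = y := by rw [ha_def, ht_def]; field_simp; ring
    have := hh.2 hrmem ⟨by linarith, hzb⟩ ha ht hat
    simp only [smul_eq_mul, hhr, mul_zero, zero_add, hcomb] at this
    exact this
  -- integrability of g (hence h) on [r, b]
  set c := (r + b) / 2 with hc_def
  have hcIoo : c ∈ Ioo r b := ⟨by rw [hc_def]; linarith, by rw [hc_def]; linarith⟩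
  have hcmem : c ∈ Icc r b := Ioo_subset_Icc_self hcIoo
  have hlow : ∀ x ∈ Icc r b, min (g r) (g b) ≤ g x := by
    intro x hx
    have hseg : x ∈ segment ℝ r b := by rwa [segment_eq_Icc hrb.le]
    exact hg.ge_on_segment hrmem hbmem hseg
  have hup : ∀ x ∈ Icc r b, g x ≤ 2 * g c - min (g r) (g b) := by
    intro x hx
    have hmx : r + b - x ∈ Icc r b := ⟨by linarith [hx.2], by linarith [hx.1]⟩
    have h2 := hh_def
    have := hg.2 hx hmx (by norm_num : (0:ℝ) ≤ 1/2) (by norm_num : (0:ℝ) ≤ 1/2)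
      (by norm_num)
    simp only [smul_eq_mul] at this
    have hmid : (1/2 : ℝ) * x + (1/2 : ℝ) * (r + b - x) = c := by
      rw [hc_def]; ring
    rw [hmid] at this
    have := hlow _ hmx
    linarith
  have hgInt : IntervalIntegrable g volume r b := by
    rw [intervalIntegrable_iff_integrableOn_Ioo_of_le hrb.le]
    have hcont : ContinuousOn g (Ioo r b) := by
      have := hg.continuousOn_interior
      rwa [interior_Icc] at this
    have hfin : IsFiniteMeasure (volume.restrict (Ioo r b)) :=
      ⟨by rw [Measure.restrict_apply_univ]; exact measure_Ioo_lt_top⟩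
    refine ⟨hcont.aestronglyMeasurable measurableSet_Ioo,
      HasFiniteIntegral.of_bounded (C := |2 * g c| + 2 * |min (g r) (g b)|) ?_⟩
    filter_upwards [ae_restrict_mem measurableSet_Ioo] with x hx
    have h1 := hlow x (Ioo_subset_Icc_self hx)
    have h2 := hup x (Ioo_subset_Icc_self hx)
    rw [Real.norm_eq_abs, abs_le]
    constructor
    · linarith [abs_nonneg (2 * g c), abs_nonneg (min (g r) (g b)),
        neg_abs_le (min (g r) (g b))]
    · linarith [le_abs_self (2 * g c), le_abs_self (min (g r) (g b)),
        neg_abs_le (min (g r) (g b))]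
  have hgbarInt : ∀ u v : ℝ, IntervalIntegrable gbar volume u v := fun u v =>
    hgbar_cont.intervalIntegrable u v
  have hgIntSub : ∀ u v : ℝ, u ∈ Icc r b → v ∈ Icc r b → IntervalIntegrable g volume u v := by
    intro u v hu hv
    refine hgInt.mono_set ?_
    rw [uIcc_of_le hrb.le]
    exact uIcc_subset_Icc hu hv
  have hhInt : ∀ u v : ℝ, u ∈ Icc r b → v ∈ Icc r b → IntervalIntegrable h volume u v :=
    fun u v hu hv => (hgIntSub u v hu hv).sub (hgbarInt u v)
  have hhint0 : (∫ u in r..b, h u) = 0 := by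
    rw [intervalIntegral.integral_sub (hgIntSub r b hrmem hbmem) (hgbarInt r b), hint]
    ring
  have hcont : ContinuousOn h (Ioo r b) := by
    have := hh.continuousOn_interior
    rwa [interior_Icc] at this
  -- existence of a zero of h in (r, b)
  have hzero : ∃ y₀ ∈ Ioo r b, h y₀ = 0 := by
    by_contra hcon
    push_neg at hcon
    have hIVT : ∀ x ∈ Ioo r b, ∀ y ∈ Ioo r b, h x < 0 → 0 < h y → False := by
      intro x hx y hy hx0 hy0
      have hsub : uIcc x y ⊆ Ioo r b := Set.ordConnected_Ioo.uIcc_subset hx hy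
      have := intermediate_value_uIcc (hcont.mono hsub)
      have h0 : (0:ℝ) ∈ uIcc (h x) (h y) := by
        rw [uIcc_of_le (le_of_lt (hx0.trans hy0))]
        exact ⟨hx0.le, hy0.le⟩
      obtain ⟨w, hw, hw0⟩ := this h0
      exact hcon w (hsub hw) hw0
    rcases lt_or_gt_of_ne (hcon c hcIoo) with hneg | hpos
    · -- h < 0 everywhere on Ioo
      have hall : ∀ x ∈ Ioo r b, h x < 0 := by
        intro x hx
        rcases lt_or_gt_of_ne (hcon x hx) with h' | h'
        · exact h'
        · exact (hIVT c hcIoo x hx hneg h').elim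
      have hposint : 0 < ∫ u in r..b, -h u := by
        refine intervalIntegral.intervalIntegral_pos_of_pos_on ((hhInt r b hrmem hbmem).neg) ?_ hrb
        intro x hx
        simpa using hall x hx
      rw [intervalIntegral.integral_neg, hhint0] at hposint
      simp at hposint
    · have hall : ∀ x ∈ Ioo r b, 0 < h x := by
        intro x hx
        rcases lt_or_gt_of_ne (hcon x hx) with h' | h'
        · exact (hIVT x hx c hcIoo h' hpos).elim
        · exact h'
      have hposint : 0 < ∫ u in r..b, h u :=
        intervalIntegral.intervalIntegral_pos_of_pos_on (hhInt r b hrmem hbmem) hall hrb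
      rw [hhint0] at hposint
      exact lt_irrefl 0 hposint
  obtain ⟨y₀, hy₀, hy₀0⟩ := hzero
  have hy₀mem : y₀ ∈ Icc r b := Ioo_subset_Icc_self hy₀
  -- sign conditions
  have hsign1 : ∀ y ∈ Icc r y₀, 0 ≤ h y := by
    intro y hy
    have := key y y₀ hy.1 hy.2 hy₀mem.2 hy₀.1
    rw [hy₀0, mul_zero] at this
    exact this
  have hsign2 : ∀ y ∈ Icc y₀ b, h y ≤ 0 := by
    intro y hy
    rcases eq_or_lt_of_le hy.1 with heq | hlt
    · rw [← heq]; exact hy₀0.le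
    · have hk := key y₀ y hy₀mem.1 hlt.le hy.2 (hy₀.1.trans hlt)
      rw [hy₀0] at hk
      have hcoef : 0 < (y₀ - r) / (y - r) := by
        apply div_pos <;> linarith [hy₀.1]
      by_contra hpos
      push_neg at hpos
      nlinarith [mul_pos hcoef hpos]
  refine ⟨y₀, hy₀, ?_, ?_, ?_⟩
  · intro y hy
    have := hsign1 y hy
    simp only [hh_def] at this
    linarith
  · intro y hy
    have := hsign2 y hy
    simp only [hh_def] at this
    linarith
  · intro y hy
    have hyInt : IntervalIntegrable h volume r y := hhInt r y hrmem hy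
    have hnn : 0 ≤ ∫ u in r..y, h u := by
      rcases le_total y y₀ with hle | hle
      · refine intervalIntegral.integral_nonneg hy.1 fun u hu => ?_
        exact hsign1 u ⟨hu.1, hu.2.trans hle⟩
      · have hsplit : (∫ u in r..y, h u) + ∫ u in y..b, h u = ∫ u in r..b, h u :=
          intervalIntegral.integral_add_adjacent_intervals hyInt (hhInt y b hy hbmem)
        have htail : (∫ u in y..b, h u) ≤ 0 := by
          have : 0 ≤ ∫ u in y..b, -h u := by
            refine intervalIntegral.integral_nonneg hy.2 fun u hu => ?_
            have := hsign2 u ⟨hle.trans hu.1, hu.2⟩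
            linarith
          rw [intervalIntegral.integral_neg] at this
          linarith
        rw [hhint0] at hsplit
        linarith
    rw [intervalIntegral.integral_sub (hgIntSub r y hrmem hy) (hgbarInt r y)] at hnn
    linarith
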